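/- For n independent binary channels each flipping with probability α, the probability of transitioning from a configuration with i-1 ones to a configuration with j-1 ones equals Aₙ(i,j) = ∑_{s=max(i-j,0)}^{min(n+1-j,i-1)} C(i-1,s)·C(n+1-i,j-i+s)·α^{j-i+2s}·(1-α)^{n-(j-i+2s)}. Formally: for any fixed x ∈ {0,1}^n with exactly i-1 ones, ∑_{y : |y|₁ = j-1} α^{d(x,y)}·(1-α)^{n-d(x,y)} = Aₙ(i,j), where d is the Hamming distance. -/

import Mathlib

noncomputable def Amat (n : ℕ) (α : ℝ) : Matrix (Fin (n+1)) (Fin (n+1)) ℝ :=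
  Matrix.of fun i j =>
    ∑ s ∈ Finset.Icc ((i : ℕ) - (j : ℕ)) (min (n - (j : ℕ)) (i : ℕ)),
      ((i : ℕ).choose s : ℝ) * ((n - (i : ℕ)).choose ((j : ℕ) + s - (i : ℕ)) : ℝ) *
        α ^ ((j : ℕ) + 2 * s - (i : ℕ)) * (1 - α) ^ (n - ((j : ℕ) + 2 * s - (i : ℕ)))

/-- number of ones of a binary string -/
def ones {n : ℕ} (x : Fin n → Bool) : ℕ := (Finset.univ.filter fun p => x p = true).card

/-- Hamming distance -/
def hd {n : ℕ} (x y : Fin n → Bool) : ℕ := (Finset.univ.filter fun p => x p ≠ y p).card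

theorem stmt_10 (n : ℕ) (α : ℝ) (i j : Fin (n+1)) (x : Fin n → Bool)
    (hx : ones x = (i : ℕ)) :
    ∑ y ∈ Finset.univ.filter (fun y : Fin n → Bool => ones y = (j : ℕ)),
        α ^ hd x y * (1 - α) ^ (n - hd x y) = Amat n α i j := by
  classical
  set S : Finset (Fin n) := Finset.univ.filter (fun p => x p = true) with hS
  have hcardS : S.card = (i : ℕ) := hx
  -- Step 1 : reindex to Finsets
  have h1 : ∑ y ∈ Finset.univ.filter (fun y : Fin n → Bool => ones y = (j : ℕ)),
      α ^ hd x y * (1 - α) ^ (n - hd x y)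
      = ∑ T ∈ Finset.powersetCard (j : ℕ) (Finset.univ : Finset (Fin n)),
          α ^ ((S \ T).card + (T \ S).card) * (1 - α) ^ (n - ((S \ T).card + (T \ S).card)) := by
    refine Finset.sum_nbij' (i := fun y : Fin n → Bool => Finset.univ.filter (fun p => y p = true))
      (j := fun T : Finset (Fin n) => fun p => decide (p ∈ T)) ?_ ?_ ?_ ?_ ?_
    · intro y hy
      simp only [Finset.mem_filter, Finset.mem_univ, true_and] at hy
      simp [Finset.mem_powersetCard, ← hy, ones]
    · intro T hT
      simp only [Finset.mem_powersetCard] at hT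
      refine Finset.mem_filter.mpr ⟨Finset.mem_univ _, ?_⟩
      simp only [ones]
      rw [← hT.2]
      congr 1
      ext p
      simp
    · intro y hy
      funext p
      simp
    · intro T hT
      ext p
      simp
    · intro y hy
      have hhd : hd x y = (S \ (Finset.univ.filter fun p => y p = true)).card
          + ((Finset.univ.filter fun p => y p = true) \ S).card := by
        rw [hd, ← Finset.card_union_of_disjoint]
        · congr 1
          ext p
          simp only [Finset.mem_filter, Finset.mem_univ, true_and, Finset.mem_union,
            Finset.mem_sdiff, hS]
          cases hxp : x p <;> cases hyp : y p <;> simp [hxp, hyp]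
        · exact disjoint_sdiff_sdiff
      rw [hhd]
  rw [h1]
  -- Step 2 : fiberwise according to s = (S \ T).card
  have h2 : ∀ T ∈ Finset.powersetCard (j : ℕ) (Finset.univ : Finset (Fin n)),
      (S \ T).card ∈ Finset.Icc ((i : ℕ) - (j : ℕ)) (min (n - (j : ℕ)) (i : ℕ)) := by
    intro T hT
    simp only [Finset.mem_powersetCard] at hT
    have h3 : (S \ T).card ≤ S.card := Finset.card_le_card (Finset.sdiff_subset)
    have h4 : S.card ≤ (S \ T).card + T.card := by
      calc S.card ≤ (S \ T).card + (S ∩ T).card := by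
            rw [Finset.card_sdiff_add_card_inter]
        _ ≤ (S \ T).card + T.card :=
            Nat.add_le_add_left (Finset.card_le_card Finset.inter_subset_right) _
    have h5 : (S \ T).card ≤ n - (j : ℕ) := by
      have : S \ T ⊆ Finset.univ \ T := Finset.sdiff_subset_sdiff (Finset.subset_univ _) le_rfl
      have h6 := Finset.card_le_card this
      rwa [Finset.card_sdiff_of_subset (Finset.subset_univ _), Finset.card_univ, Fintype.card_fin,
        hT.2] at h6
    simp only [Finset.mem_Icc, le_min_iff]
    omega
  rw [← Finset.sum_fiberwise_of_maps_to h2]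
  apply Finset.sum_congr rfl
  intro s hs
  simp only [Finset.mem_Icc, le_min_iff] at hs
  -- cardinality of each fiber
  have hfib : ((Finset.powersetCard (j : ℕ) (Finset.univ : Finset (Fin n))).filter
      (fun T => (S \ T).card = s)).card
      = (i : ℕ).choose s * (n - (i : ℕ)).choose ((j : ℕ) + s - (i : ℕ)) := by
    have hcardSc : (Finset.univ \ S).card = n - (i : ℕ) := by
      rw [Finset.card_sdiff_of_subset (Finset.subset_univ _), Finset.card_univ, Fintype.card_fin, hcardS]
    rw [← hcardSc, ← hcardS, ← Finset.card_powersetCard, ← Finset.card_powersetCard,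
      ← Finset.card_product]
    refine Finset.card_nbij' (fun T => (S \ T, T \ S))
      (fun P => (S \ P.1) ∪ P.2) ?_ ?_ ?_ ?_
    · intro T hT
      simp only [Finset.mem_coe, Finset.mem_filter, Finset.mem_powersetCard] at hT
      obtain ⟨⟨_, hTj⟩, hTs⟩ := hT
      have e1 : S.card = (S \ T).card + (S ∩ T).card := (Finset.card_sdiff_add_card_inter S T).symm
      have e2 : T.card = (T \ S).card + (T ∩ S).card := (Finset.card_sdiff_add_card_inter T S).symm
      rw [Finset.inter_comm] at e2
      simp only [Finset.mem_coe, Finset.mem_product, Finset.mem_powersetCard]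
      refine ⟨⟨Finset.sdiff_subset, hTs⟩, Finset.sdiff_subset_sdiff (Finset.subset_univ _) le_rfl, ?_⟩
      omega
    · intro P hP
      simp only [Finset.mem_coe, Finset.mem_product, Finset.mem_powersetCard] at hP
      obtain ⟨⟨hA, hAc⟩, hB, hBc⟩ := hP
      have hdisj : Disjoint (S \ P.1) P.2 := by
        refine Finset.disjoint_left.mpr ?_
        intro a ha hb
        have := hB hb
        simp only [Finset.mem_sdiff] at this ha
        exact this.2 ha.1
      have hBS : Disjoint P.2 S := by
        refine Finset.disjoint_left.mpr ?_
        intro a hb haS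
        have := hB hb
        simp only [Finset.mem_sdiff] at this
        exact this.2 haS
      have hSdiff : S \ ((S \ P.1) ∪ P.2) = P.1 := by
        ext p
        have h1p := fun (h : p ∈ P.1) => hA h
        have h2p := fun (h : p ∈ P.2) => Finset.disjoint_left.mp hBS h
        simp only [Finset.mem_sdiff, Finset.mem_union, not_or, not_and, not_not]
        tauto
      simp only [Finset.mem_coe, Finset.mem_filter, Finset.mem_powersetCard]
      refine ⟨⟨Finset.subset_univ _, ?_⟩, by rw [hSdiff, hAc]⟩
      rw [Finset.card_union_of_disjoint hdisj, Finset.card_sdiff_of_subset hA, hcardS, hAc, hBc]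
      omega
    · intro T hT
      simp only [Finset.mem_coe, Finset.mem_filter, Finset.mem_powersetCard] at hT
      simp only [Finset.sdiff_sdiff_self_left]
      ext p
      simp only [Finset.mem_union, Finset.mem_inter, Finset.mem_sdiff]
      tauto
    · intro P hP
      simp only [Finset.mem_coe, Finset.mem_product, Finset.mem_powersetCard] at hP
      obtain ⟨⟨hA, hAc⟩, hB, hBc⟩ := hP
      have hBS : ∀ a ∈ P.2, a ∉ S := by
        intro a hb haS
        have := hB hb
        simp only [Finset.mem_sdiff] at this
        exact this.2 haS
      have h1 : S \ ((S \ P.1) ∪ P.2) = P.1 := by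
        ext p
        have h1p := fun (h : p ∈ P.1) => hA h
        have h2p := fun (h : p ∈ P.2) => hBS p h
        simp only [Finset.mem_sdiff, Finset.mem_union, not_or, not_and, not_not]
        tauto
      have h2 : ((S \ P.1) ∪ P.2) \ S = P.2 := by
        ext p
        have h1p := fun (h : p ∈ P.1) => hA h
        have h2p := fun (h : p ∈ P.2) => hBS p h
        simp only [Finset.mem_sdiff, Finset.mem_union]
        tauto
      rw [Prod.ext_iff]
      exact ⟨h1, h2⟩
  -- compute inner sum
  have hval : ∀ T ∈ (Finset.powersetCard (j : ℕ) (Finset.univ : Finset (Fin n))).filter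
      (fun T => (S \ T).card = s),
      α ^ ((S \ T).card + (T \ S).card) * (1 - α) ^ (n - ((S \ T).card + (T \ S).card))
      = α ^ ((j : ℕ) + 2 * s - (i : ℕ)) * (1 - α) ^ (n - ((j : ℕ) + 2 * s - (i : ℕ))) := by
    intro T hT
    simp only [Finset.mem_filter, Finset.mem_powersetCard] at hT
    obtain ⟨⟨_, hTj⟩, hTs⟩ := hT
    have e1 : S.card = (S \ T).card + (S ∩ T).card := (Finset.card_sdiff_add_card_inter S T).symm
    have e2 : T.card = (T \ S).card + (T ∩ S).card := (Finset.card_sdiff_add_card_inter T S).symm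
    rw [Finset.inter_comm] at e2
    have : (S \ T).card + (T \ S).card = (j : ℕ) + 2 * s - (i : ℕ) := by omega
    rw [this]
  rw [Finset.sum_congr rfl hval, Finset.sum_const, hfib, nsmul_eq_mul]
  push_cast
  ring
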